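/- Let q = r^2 with r an odd prime power, θ a primitive element of F_q, and q − 1 = e_1 f_1 = e_2 f_2 two factorizations into positive integers. Suppose there exists an integer l ≥ 2 with e_1 ≡ 2^l (mod 2^{l+1}) and 2^l | e_2 (in particular e_1 is even). Set α = θ^{e_1}, β = θ^{e_2}, γ = θ^{e_1/2}, A = ⟨α⟩, and B = ⟨β⟩. Then for all integers i and j, the cosets β^i A and γ^{2j+1} B are disjoint; equivalently, θ^{e_2 μ + e_1 ν} ≠ θ^{(e_1/2)(2μ' + 1) + e_2 ν'} for all integers μ, ν, μ', ν'. -/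
import Mathlib


/-- (From the proof of Theorem 3.2.) With `θ` a primitive element of `F_q`, `q = r²`,
`α = θ^{e₁}`, `β = θ^{e₂}`, `γ = θ^{e₁/2}`, `A = ⟨α⟩`, `B = ⟨β⟩`, and `e₁ ≡ 2^l (mod 2^{l+1})`,
`2^l ∣ e₂` for some `l ≥ 2`, the cosets `β^i A` and `γ^{2j+1} B` are disjoint. -/
theorem cosets_disjoint
    (r e1 f1 e2 f2 l : ℕ)
    (hr_odd : Odd r) (hr_pp : IsPrimePow r)
    (hq1 : r ^ 2 - 1 = e1 * f1) (hq2 : r ^ 2 - 1 = e2 * f2)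
    (hl : 2 ≤ l) (he1 : e1 % 2 ^ (l + 1) = 2 ^ l) (he2 : 2 ^ l ∣ e2)
    (F : Type*) [Field F] [Fintype F]
    (hF : Fintype.card F = r ^ 2)
    (θ : Fˣ) (hθ : ∀ x : Fˣ, x ∈ Subgroup.zpowers θ) :
    ∀ i j : ℤ,
      Disjoint
        (((θ ^ e2 : Fˣ) ^ i * ·) '' (Subgroup.zpowers (θ ^ e1) : Set Fˣ))
        (((θ ^ (e1 / 2) : Fˣ) ^ (2 * j + 1) * ·) '' (Subgroup.zpowers (θ ^ e2) : Set Fˣ)) := by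
  intro i j
  -- structure of e1
  set t := e1 / 2 ^ (l + 1) with ht
  have he1' : e1 = 2 ^ l * (2 * t + 1) := by
    have := Nat.div_add_mod e1 (2 ^ (l + 1))
    rw [he1] at this
    rw [← this]; ring
  have hl1 : 1 ≤ l := le_trans one_le_two hl
  have he1half : e1 / 2 = 2 ^ (l - 1) * (2 * t + 1) := by
    have : e1 = 2 * (2 ^ (l - 1) * (2 * t + 1)) := by
      rw [he1']
      have : 2 ^ l = 2 * 2 ^ (l - 1) := by
        rw [← pow_succ']
        congr 1
        omega
      rw [this]; ring
    omega
  -- order of θ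
  classical
  have horder : orderOf θ = r ^ 2 - 1 := by
    rw [orderOf_eq_card_of_forall_mem_zpowers hθ, Nat.card_eq_fintype_card, Fintype.card_units, hF]
  -- disjointness
  rw [Set.disjoint_left]
  rintro x ⟨a, ⟨n, rfl⟩, rfl⟩ ⟨b, ⟨m, rfl⟩, hx⟩
  simp only at hx
  -- rewrite as zpow equation
  have key : θ ^ ((e1 / 2 : ℕ) * (2 * j + 1) + e2 * m) = θ ^ ((e2 : ℤ) * i + e1 * n) := by
    rw [zpow_add, zpow_add, zpow_mul, zpow_mul, zpow_mul, zpow_mul,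
      zpow_natCast, zpow_natCast, zpow_natCast]
    exact hx
  have hdvd : ((orderOf θ : ℤ)) ∣ ((e1 / 2 : ℕ) * (2 * j + 1) + e2 * m) - ((e2 : ℤ) * i + e1 * n) := by
    rw [orderOf_dvd_iff_zpow_eq_one, zpow_sub, key, mul_inv_cancel]
  rw [horder] at hdvd
  -- 2^l divides r^2 - 1
  have h2l : (2 ^ l : ℤ) ∣ ((r : ℤ) ^ 2 - 1) := by
    have h1 : (2 ^ l : ℕ) ∣ r ^ 2 - 1 := hq1 ▸ Dvd.dvd.mul_right ⟨2 * t + 1, he1'⟩ f1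
    have hr1 : 1 ≤ r ^ 2 := by
      nlinarith [hr_pp.pos]
    have := Int.natCast_dvd_natCast.mpr h1
    rw [Nat.cast_sub hr1] at this
    push_cast at this ⊢
    exact this
  have hrcast : ((r ^ 2 - 1 : ℕ) : ℤ) = (r : ℤ) ^ 2 - 1 := by
    have hr1 : 1 ≤ r ^ 2 := by nlinarith [hr_pp.pos]
    push_cast [Nat.cast_sub hr1]
    ring
  rw [hrcast] at hdvd
  -- deduce 2^l ∣ (e1/2)*(2j+1)
  have he2' : (2 ^ l : ℤ) ∣ (e2 : ℤ) := by exact_mod_cast Int.natCast_dvd_natCast.mpr he2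
  have he1d : (2 ^ l : ℤ) ∣ (e1 : ℤ) := ⟨2 * t + 1, by exact_mod_cast congrArg (Nat.cast : ℕ → ℤ) he1'⟩
  have hfinal : (2 ^ l : ℤ) ∣ ((e1 / 2 : ℕ) : ℤ) * (2 * j + 1) := by
    have := dvd_sub (h2l.trans hdvd) (dvd_sub (he2'.mul_right m) (dvd_add (he2'.mul_right i) (he1d.mul_right n)))
    have heq : ((e1 / 2 : ℕ) : ℤ) * (2 * j + 1) =
        (((e1 / 2 : ℕ) * (2 * j + 1) + e2 * m) - ((e2 : ℤ) * i + e1 * n))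
        - ((e2 : ℤ) * m - ((e2 : ℤ) * i + (e1 : ℤ) * n)) := by ring
    rwa [← heq] at this
  -- contradiction: v2 of RHS is l-1
  rw [he1half] at hfinal
  push_cast at hfinal
  have hpow : (2 : ℤ) ^ l = 2 ^ (l - 1) * 2 := by
    rw [← pow_succ]
    congr 1
    omega
  rw [hpow] at hfinal
  have h2 : (2 : ℤ) ∣ (2 * (t : ℤ) + 1) * (2 * j + 1) := by
    have hne : (2 : ℤ) ^ (l - 1) ≠ 0 := by positivity
    have : (2 : ℤ) ^ (l - 1) * 2 ∣ 2 ^ (l - 1) * ((2 * (t : ℤ) + 1) * (2 * j + 1)) := by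
      have heq : (2 : ℤ) ^ (l - 1) * (2 * (t : ℤ) + 1) * (2 * j + 1)
          = 2 ^ (l - 1) * ((2 * (t : ℤ) + 1) * (2 * j + 1)) := by ring
      rwa [heq] at hfinal
    exact (mul_dvd_mul_iff_left hne).mp this
  have hodd : Odd ((2 * (t : ℤ) + 1) * (2 * j + 1)) :=
    (odd_two_mul_add_one _).mul (odd_two_mul_add_one _)
  rw [← Int.not_even_iff_odd] at hodd
  exact hodd (even_iff_two_dvd.mpr h2)
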